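/- If (x_0, ν_0, η_0) is an invariant state of the fluid equations with arrival rate λ ∈ (0,∞), then η_0(dx) = λ(1-G^r(x))dx on [0,H^r), i.e., η_0 = λη*. -/

import Mathlib

open Set MeasureTheory Filter

open scoped NNReal ENNReal

/-- If `(x₀, ν₀, η₀)` is an invariant state of the fluid equations with arrival rate
`λ ∈ (0,∞)`, then `η₀(dx) = λ (1 - G^r(x)) dx`, i.e. `η₀ = λ η*`.  Following the paper, we
formalize: if a finite measure `η₀` on `[0,H^r)` (where `H^r = sup{x : G^r(x) < 1}`)
satisfies, for every bounded continuous `f` and every `t ≥ 0`,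
`∫ f dη₀ = ∫ f(x+t) (1-G^r(x+t))/(1-G^r(x)) η₀(dx) + λ ∫_0^t f(s)(1-G^r(s)) ds`,
where `G^r` is a continuous CDF with density and finite mean, then
`η₀(dx) = λ (1-G^r(x)) dx`. -/
theorem stmt9 (G g : ℝ → ℝ) (lam : ℝ) (η0 : Measure ℝ) [IsFiniteMeasure η0]
    (hlam : 0 < lam)
    (hGcont : Continuous G) (hGmono : Monotone G)
    (hG0 : G 0 = 0) (hG1 : ∀ x, G x ≤ 1)
    (hgnn : ∀ x, 0 ≤ g x)
    (hdens : ∀ x, G x = ∫ y in (0:ℝ)..x, g y)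
    (hmean : IntegrableOn (fun x => 1 - G x) (Ioi 0))
    (hsupp0 : η0 (Iio 0) = 0) (hsuppH : η0 {x : ℝ | 1 ≤ G x} = 0)
    (hinv : ∀ f : ℝ → ℝ, Continuous f → (∃ M, ∀ x, |f x| ≤ M) → ∀ t : ℝ, 0 ≤ t →
      (∫ x, f x ∂η0)
        = (∫ x, f (x + t) * ((1 - G (x + t)) / (1 - G x)) ∂η0)
          + lam * ∫ s in (0:ℝ)..t, f s * (1 - G s)) :
    η0 = (volume.restrict (Ioi 0)).withDensity
      (fun x => ENNReal.ofReal (lam * (1 - G x))) := by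
  have hG1' : ∀ x, 0 ≤ 1 - G x := fun x => by linarith [hG1 x]
  -- 1 - G tends to 0 at infinity
  have hbdd : BddBelow (Set.range fun x => 1 - G x) := by
    refine ⟨0, ?_⟩; rintro y ⟨x, rfl⟩; exact hG1' x
  have hanti : Antitone fun x => 1 - G x := fun a b hab => by
    have := hGmono hab; simp only [sub_le_sub_iff_left]; exact this
  have htend := tendsto_atTop_ciInf hanti hbdd
  have hl0 : 0 ≤ ⨅ x, 1 - G x := le_ciInf fun x => hG1' x
  have hlle : ∀ x, (⨅ x, 1 - G x) ≤ 1 - G x := fun x => ciInf_le hbdd x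
  have hlz : (⨅ x, 1 - G x) = 0 := by
    by_contra h
    have hlpos : 0 < ⨅ x, 1 - G x := lt_of_le_of_ne hl0 (Ne.symm h)
    have hconst : IntegrableOn (fun _ : ℝ => (⨅ x, 1 - G x)) (Ioi 0) := by
      refine hmean.mono' aestronglyMeasurable_const ?_
      exact Filter.Eventually.of_forall fun x => by
        rw [Real.norm_eq_abs, abs_of_nonneg hl0]; exact hlle x
    rw [integrableOn_const_iff] at hconst
    rcases hconst with h' | h'
    · exact h (enorm_eq_zero.mp h')
    · simp [Real.volume_Ioi] at h'
  rw [hlz] at htend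
  have hGlim : Tendsto (fun x => 1 - G x) atTop (nhds 0) := htend
  -- ratio bounds
  have hratio : ∀ x t : ℝ, 0 ≤ t →
      0 ≤ (1 - G (x + t)) / (1 - G x) ∧ (1 - G (x + t)) / (1 - G x) ≤ 1 := by
    intro x t ht
    refine ⟨div_nonneg (hG1' _) (hG1' _), ?_⟩
    have hx : G x ≤ G (x + t) := hGmono (le_add_of_nonneg_right ht)
    exact div_le_one_of_le₀ (by linarith) (hG1' x)
  -- key identity for bounded continuous f
  have hkey : ∀ (f : ℝ → ℝ) (M : ℝ), Continuous f → (∀ x, |f x| ≤ M) →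
      ∫ x, f x ∂η0 = lam * ∫ x in Ioi 0, f x * (1 - G x) := by
    intro f M hf hM
    have hMnn : 0 ≤ M := le_trans (abs_nonneg _) (hM 0)
    have hint : IntegrableOn (fun s => f s * (1 - G s)) (Ioi 0) := by
      refine hmean.bdd_mul (c := M) hf.aestronglyMeasurable (Filter.Eventually.of_forall fun x => ?_)
      rw [Real.norm_eq_abs]; exact hM x
    have hB : Tendsto (fun n : ℕ => ∫ s in (0:ℝ)..(n:ℝ), f s * (1 - G s)) atTop
        (nhds (∫ s in Ioi 0, f s * (1 - G s))) :=
      intervalIntegral_tendsto_integral_Ioi 0 hint tendsto_natCast_atTop_atTop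
    have hmeasA : ∀ n : ℕ, AEStronglyMeasurable
        (fun x => f (x + (n : ℝ)) * ((1 - G (x + (n : ℝ))) / (1 - G x))) η0 := by
      intro n
      refine ((hf.comp (continuous_id.add continuous_const)).aestronglyMeasurable.mul ?_)
      exact ((continuous_const.sub
        (hGcont.comp (continuous_id.add continuous_const))).measurable.div
        (continuous_const.sub hGcont).measurable).aestronglyMeasurable
    have hboundA : ∀ n : ℕ, ∀ᵐ x ∂η0,
        ‖f (x + (n : ℝ)) * ((1 - G (x + (n : ℝ))) / (1 - G x))‖ ≤ M := by
      intro n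
      refine Filter.Eventually.of_forall fun x => ?_
      have hr := hratio x n n.cast_nonneg
      rw [norm_mul, Real.norm_eq_abs, Real.norm_eq_abs, abs_of_nonneg hr.1]
      calc |f (x + (n:ℝ))| * ((1 - G (x + (n:ℝ))) / (1 - G x))
          ≤ M * 1 := mul_le_mul (hM _) hr.2 hr.1 hMnn
        _ = M := mul_one M
    have hptA : ∀ᵐ x ∂η0, Tendsto
        (fun n : ℕ => f (x + (n : ℝ)) * ((1 - G (x + (n : ℝ))) / (1 - G x)))
        atTop (nhds 0) := by
      refine Filter.Eventually.of_forall fun x => ?_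
      rcases eq_or_lt_of_le (hG1' x) with h0 | hpos
      · have hz : ∀ n : ℕ, f (x + (n : ℝ)) * ((1 - G (x + (n : ℝ))) / (1 - G x)) = 0 := by
          intro n
          have h1 : G (x + (n : ℝ)) = 1 := by
            have := hGmono (le_add_of_nonneg_right (n.cast_nonneg (α := ℝ)) (a := x))
            have := hG1 (x + (n : ℝ)); linarith
          rw [h1]; simp
        simp only [hz]; exact tendsto_const_nhds
      · have hnum : Tendsto (fun n : ℕ => 1 - G (x + (n : ℝ))) atTop (nhds 0) :=
          hGlim.comp (tendsto_atTop_add_const_left _ x tendsto_natCast_atTop_atTop)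
        have hr : Tendsto (fun n : ℕ => (1 - G (x + (n : ℝ))) / (1 - G x)) atTop (nhds 0) := by
          simpa using hnum.div_const (1 - G x)
        refine squeeze_zero_norm (fun n => ?_) (by simpa using hr.const_mul M)
        have hrr := hratio x n n.cast_nonneg
        rw [norm_mul, Real.norm_eq_abs, Real.norm_eq_abs, abs_of_nonneg hrr.1]
        exact mul_le_mul_of_nonneg_right (hM _) hrr.1
    have hA : Tendsto
        (fun n : ℕ => ∫ x, f (x + (n : ℝ)) * ((1 - G (x + (n : ℝ))) / (1 - G x)) ∂η0)
        atTop (nhds (∫ _x, (0:ℝ) ∂η0)) :=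
      tendsto_integral_of_dominated_convergence (fun _ => M) hmeasA (integrable_const M)
        hboundA hptA
    rw [integral_zero] at hA
    have heq : ∀ n : ℕ, (∫ x, f x ∂η0)
        = (∫ x, f (x + (n : ℝ)) * ((1 - G (x + (n : ℝ))) / (1 - G x)) ∂η0)
          + lam * ∫ s in (0:ℝ)..(n:ℝ), f s * (1 - G s) :=
      fun n => hinv f hf ⟨M, hM⟩ n n.cast_nonneg
    have hsum := hA.add (hB.const_mul lam)
    rw [show (fun n : ℕ =>
        (∫ x, f (x + (n : ℝ)) * ((1 - G (x + (n : ℝ))) / (1 - G x)) ∂η0)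
          + lam * ∫ s in (0:ℝ)..(n:ℝ), f s * (1 - G s))
        = fun _n : ℕ => ∫ x, f x ∂η0 from funext fun n => (heq n).symm] at hsum
    have := tendsto_nhds_unique tendsto_const_nhds hsum
    rw [this, zero_add]
  -- conclude by extensionality against bounded continuous ℝ≥0-valued functions
  have hdensmeas : Measurable fun x => ENNReal.ofReal (lam * (1 - G x)) :=
    (measurable_const.mul (measurable_const.sub hGcont.measurable)).ennreal_ofReal
  refine ext_of_forall_lintegral_eq_of_IsFiniteMeasure fun F => ?_
  set f : ℝ → ℝ := fun x => (F x : ℝ) with hfdef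
  have hfc : Continuous f := NNReal.continuous_coe.comp F.continuous
  have hfnn : ∀ x, 0 ≤ f x := fun x => (F x).coe_nonneg
  obtain ⟨C, hC⟩ := F.bounded
  set M : ℝ := f 0 + C with hMdef
  have hM : ∀ x, |f x| ≤ M := by
    intro x
    rw [abs_of_nonneg (hfnn x)]
    have h1 := hC x 0
    rw [NNReal.dist_eq] at h1
    have h2 := le_of_abs_le h1
    simp only [hMdef, hfdef]
    linarith
  have hfint : Integrable f η0 := by
    refine (integrable_const M).mono' hfc.aestronglyMeasurable ?_
    exact Filter.Eventually.of_forall fun x => by rw [Real.norm_eq_abs]; exact hM x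
  have hintf : IntegrableOn (fun s => f s * (1 - G s)) (Ioi 0) := by
    refine hmean.bdd_mul (c := M) hfc.aestronglyMeasurable (Filter.Eventually.of_forall fun x => ?_)
    rw [Real.norm_eq_abs]; exact hM x
  have hmain := hkey f M hfc hM
  have hmeasF : Measurable fun x => (F x : ℝ≥0∞) :=
    measurable_coe_nnreal_ennreal.comp F.continuous.measurable
  have h1 : ∫⁻ x, (F x : ℝ≥0∞) ∂η0 = ENNReal.ofReal (∫ x, f x ∂η0) := by
    rw [ofReal_integral_eq_lintegral_ofReal hfint (Filter.Eventually.of_forall hfnn)]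
    simp_rw [hfdef, ENNReal.ofReal_coe_nnreal]
  have hintf2 : IntegrableOn (fun x => lam * (1 - G x) * f x) (Ioi 0) := by
    have h := hintf.const_mul lam
    have hfe : (fun x => lam * (1 - G x) * f x) = fun x => lam * (f x * (1 - G x)) :=
      funext fun x => by ring
    rw [hfe]; exact h
  have h2 : ∫⁻ x, (F x : ℝ≥0∞)
        ∂((volume.restrict (Ioi 0)).withDensity (fun x => ENNReal.ofReal (lam * (1 - G x))))
      = ENNReal.ofReal (∫ x in Ioi 0, lam * (1 - G x) * f x) := by
    rw [lintegral_withDensity_eq_lintegral_mul _ hdensmeas hmeasF]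
    rw [ofReal_integral_eq_lintegral_ofReal hintf2 (Filter.Eventually.of_forall fun x =>
      mul_nonneg (mul_nonneg hlam.le (hG1' x)) (hfnn x))]
    refine lintegral_congr fun x => ?_
    simp only [Pi.mul_apply]
    rw [ENNReal.ofReal_mul (mul_nonneg hlam.le (hG1' x)), ENNReal.ofReal_coe_nnreal]
  rw [h1, h2, hmain]
  congr 1
  rw [← integral_const_mul]
  exact setIntegral_congr_fun measurableSet_Ioi fun x _ => by ring
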